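/- arXiv:cs/0111038 — 8 statements merged into one kernel-verified Lean document; each statement's English description precedes it below -/
import Mathlib

section
/- In a fair valuation structure, if α is an absorbing element and β ≽ α, then α ⊕ β = β and β ⊖ α = β. -/
structure FairVS (E : Type*) [LinearOrder E] where
  op : E → E → E
  bot : E
  top : E
  bot_le : ∀ a : E, bot ≤ a
  le_top : ∀ a : E, a ≤ top
  comm : ∀ a b : E, op a b = op b a
  assoc : ∀ a b c : E, op (op a b) c = op a (op b c)
  iden : ∀ a : E, op a bot = a
  mono : ∀ a b c : E, b ≤ a → op b c ≤ op a c
  absorb : ∀ a : E, op a top = top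
  sub : E → E → E
  sub_add : ∀ a b : E, a ≤ b → op (sub b a) a = b
  sub_max : ∀ a b g : E, a ≤ b → op g a = b → g ≤ sub b a

theorem stmt4 {E : Type*} [LinearOrder E] (S : FairVS E) (α β : E)
    (habs : S.op α α = α) (h : α ≤ β) :
    S.op α β = β ∧ S.sub β α = β := by
  have hsa := S.sub_add α β h
  have h1 : S.op α β = β := by
    calc S.op α β = S.op α (S.op (S.sub β α) α) := by rw [hsa]
    _ = S.op (S.sub β α) (S.op α α) := by
        rw [S.comm α, S.assoc]
    _ = β := by rw [habs, hsa]
  refine ⟨h1, le_antisymm ?_ ?_⟩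
  · calc S.sub β α = S.op (S.sub β α) S.bot := (S.iden _).symm
    _ = S.op S.bot (S.sub β α) := S.comm _ _
    _ ≤ S.op α (S.sub β α) := S.mono _ _ _ (S.bot_le α)
    _ = β := by rw [S.comm]; exact hsa
  · exact S.sub_max α β β h (by rw [S.comm]; exact h1)
end

section
/- In a fair valuation structure, for every valuation α, the element α ⊖ α is the maximal absorbing valuation less than or equal to α; in particular α ⊖ α is absorbing, α ⊖ α ≼ α, and every absorbing element γ ≼ α satisfies γ ≼ α ⊖ α. -/
theorem stmt6 {E : Type*} [LinearOrder E] (S : FairVS E) (α : E) :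
    S.op (S.sub α α) (S.sub α α) = S.sub α α ∧
    S.sub α α ≤ α ∧
    ∀ γ : E, S.op γ γ = γ → γ ≤ α → γ ≤ S.sub α α := by
  set d := S.sub α α with hd
  have hda : S.op d α = α := S.sub_add α α le_rfl
  have hdd : S.op d d = d := by
    have h1 : S.op d d ≤ d := by
      apply S.sub_max α α _ le_rfl
      rw [S.assoc, hda, hda]
    have h2 : d ≤ S.op d d := by
      have := S.mono d S.bot d (S.bot_le d)
      rwa [S.comm S.bot d, S.iden] at this
    exact le_antisymm h1 h2
  have hdle : d ≤ α := by
    have := S.mono α S.bot d (S.bot_le α)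
    rw [S.comm S.bot d, S.iden, S.comm α d, hda] at this
    exact this
  refine ⟨hdd, hdle, fun γ hγ hγα => ?_⟩
  apply S.sub_max α α γ le_rfl
  have h := S.sub_add γ α hγα
  calc S.op γ α = S.op γ (S.op (S.sub α γ) γ) := by rw [h]
    _ = S.op (S.op γ γ) (S.sub α γ) := by
        rw [S.assoc, S.comm (S.sub α γ) γ, ← S.assoc]
    _ = α := by rw [hγ, S.comm, h]
end

section
/- In a fair valuation structure, for all valuations α and β, ((α ⊕ β) ⊖ α) ⊖ β = (α ⊕ β) ⊖ (α ⊕ β). -/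
theorem fvs_le_op {E : Type*} [LinearOrder E] (S : FairVS E) (a b : E) :
    a ≤ S.op a b := by
  have h := S.mono b S.bot a (S.bot_le b)
  rw [S.comm S.bot a, S.iden] at h
  rw [S.comm a b]; exact h

theorem stmt7 {E : Type*} [LinearOrder E] (S : FairVS E) (α β : E) :
    S.sub (S.sub (S.op α β) α) β = S.sub (S.op α β) (S.op α β) := by
  set γ := S.op α β with hγ
  have hαγ : α ≤ γ := fvs_le_op S α β
  have hβγ : β ≤ γ := by rw [hγ, S.comm]; exact fvs_le_op S β α
  set d := S.sub γ α with hd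
  have hdα : S.op d α = γ := S.sub_add α γ hαγ
  have hβd : β ≤ d := S.sub_max α γ β hαγ (by rw [S.comm β α])
  set e := S.sub d β with he
  have heβ : S.op e β = d := S.sub_add β d hβd
  set z := S.sub γ γ with hz
  have hzγ : S.op z γ = γ := S.sub_add γ γ le_rfl
  -- e ≤ z
  have h1 : S.op e γ = γ := by
    rw [hγ, S.comm α β, ← S.assoc, heβ, hdα, S.comm β α]
  have hez : e ≤ z := S.sub_max γ γ e le_rfl h1
  -- z⊕d = d
  have hzd : S.op z d = d := by
    have hle : S.op z d ≤ d := S.sub_max α γ (S.op z d) hαγ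
      (by rw [S.assoc, hdα, hzγ])
    have hge : d ≤ S.op z d := by rw [S.comm]; exact fvs_le_op S d z
    exact le_antisymm hle hge
  -- z ≤ e
  have h2 : S.op (S.op e z) β = d := by
    rw [S.assoc, S.comm z β, ← S.assoc, heβ, S.comm d z, hzd]
  have hze : z ≤ e := le_trans (by rw [S.comm]; exact fvs_le_op S z e)
    (S.sub_max β d (S.op e z) hβd h2)
  exact le_antisymm hez hze
end

section
/- In a valuation structure with at least three distinct elements (|E| > 2), the operation ⊕ cannot be both idempotent and strictly monotonic. -/
structure ValStruct (E : Type*) [LinearOrder E] where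
  op : E → E → E
  bot : E
  top : E
  bot_le : ∀ a : E, bot ≤ a
  le_top : ∀ a : E, a ≤ top
  comm : ∀ a b : E, op a b = op b a
  assoc : ∀ a b c : E, op (op a b) c = op a (op b c)
  iden : ∀ a : E, op a bot = a
  mono : ∀ a b c : E, b ≤ a → op b c ≤ op a c
  absorb : ∀ a : E, op a top = top

theorem stmt11 {E : Type*} [LinearOrder E] (S : ValStruct E)
    (a b c : E) (hab : a ≠ b) (hac : a ≠ c) (hbc : b ≠ c)
    (hidem : ∀ α : E, S.op α α = α)
    (hsm : ∀ α β γ : E, β < α → γ ≠ S.top → S.op β γ < S.op α γ) :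
    False := by
  -- key: no u < v with v ≠ top
  have key : ∀ u v : E, u < v → v ≠ S.top → False := by
    intro u v huv hv
    have hz : S.op u v < v := by
      have := hsm v u v huv hv
      rwa [hidem v] at this
    have hztop : S.op u v ≠ S.top :=
      ne_of_lt (lt_of_lt_of_le hz (S.le_top v))
    have h1 : S.op u (S.op u v) = S.op u v := by
      rw [← S.assoc, hidem u]
    have h2 : S.op v (S.op u v) = S.op u v := by
      rw [S.comm v, S.assoc, hidem v]
    have := hsm v u (S.op u v) huv hztop
    rw [h1, h2] at this
    exact lt_irrefl _ this
  -- find two distinct elements both ≠ top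
  have pair : ∀ u v : E, u ≠ v → u ≠ S.top → v ≠ S.top → False := by
    intro u v huv hu hv
    rcases lt_or_gt_of_ne huv with h | h
    · exact key u v h hv
    · exact key v u h hu
  by_cases ha : a = S.top
  · exact pair b c hbc (fun h => hab (ha.trans h.symm)) (fun h => hac (ha.trans h.symm))
  · by_cases hb : b = S.top
    · exact pair a c hac ha (fun h => hbc (hb.trans h.symm))
    · exact pair a b hab ha hb
end

section
/- In a fair valuation structure, if α = α ⊕ β ⊕ γ, α' ≽ α, and γ' ≼ γ, then α' = α' ⊕ β ⊕ γ'. -/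
theorem stmt12 {E : Type*} [LinearOrder E] (S : FairVS E) (α β γ α' γ' : E)
    (h : α = S.op (S.op α β) γ) (hα : α ≤ α') (hγ : γ' ≤ γ) :
    α' = S.op (S.op α' β) γ' := by
  have mono2 : ∀ a b c : E, b ≤ a → S.op c b ≤ S.op c a := by
    intro a b c hba
    rw [S.comm c b, S.comm c a]; exact S.mono a b c hba
  have le_op : ∀ a b : E, a ≤ S.op a b := by
    intro a b
    calc a = S.op a S.bot := (S.iden a).symm
    _ ≤ S.op a b := mono2 b S.bot a (S.bot_le b)
  have hδ : S.op (S.sub α' α) α = α' := S.sub_add α α' hα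
  refine le_antisymm ?_ ?_
  · calc α' ≤ S.op α' β := le_op α' β
    _ ≤ S.op (S.op α' β) γ' := le_op _ γ'
  · calc S.op (S.op α' β) γ' ≤ S.op (S.op α' β) γ := mono2 γ γ' _ hγ
    _ = S.op (S.op (S.op (S.sub α' α) α) β) γ := by rw [hδ]
    _ = S.op (S.sub α' α) (S.op (S.op α β) γ) := by rw [S.assoc, S.assoc, ← S.assoc α β γ]
    _ = S.op (S.sub α' α) α := by rw [← h]
    _ = α' := hδ
end

section
/- Let V be a binary VCSP over a fair valuation structure whose constraint graph is a tree T, directional arc consistent with respect to a topological ordering of T rooted at variable 1. Then for every value a in the domain of variable 1, c₁(a) equals the minimum, over all complete assignments t with t(1) = a, of the total valuation of t. -/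
section Helpers

variable {E : Type*} (op : E → E → E) (bot : E)

theorem myfold_init (hc : ∀ a b, op a b = op b a) (ha : ∀ a b c, op (op a b) c = op a (op b c))
    (hi : ∀ a, op a bot = a) (l : List E) (b : E) :
    l.foldr op b = op (l.foldr op bot) b := by
  induction l with
  | nil => simp only [List.foldr_nil]; rw [hc, hi]
  | cons x xs ih => simp only [List.foldr_cons, ih]; rw [ha]

theorem myfold_filter {α : Type*} (hc : ∀ a b, op a b = op b a) (hi : ∀ a, op a bot = a)
    (p : α → Prop) [DecidablePred p] (f : α → E) (l : List α) :
    ((l.filter fun x => decide (p x)).map f).foldr op bot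
      = (l.map fun x => if p x then f x else bot).foldr op bot := by
  induction l with
  | nil => rfl
  | cons x xs ih =>
    by_cases hx : p x
    · simp [List.filter_cons, hx, ih]
    · simp [List.filter_cons, hx, ih]
      rw [hc, hi]

theorem myfold_combine {α : Type*} (hc : ∀ a b, op a b = op b a)
    (ha : ∀ a b c, op (op a b) c = op a (op b c)) (hi : ∀ a, op a bot = a)
    (f g : α → E) (l : List α) :
    op ((l.map f).foldr op bot) ((l.map g).foldr op bot)
      = (l.map fun x => op (f x) (g x)).foldr op bot := by
  haveI : Std.Associative op := ⟨ha⟩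
  haveI : Std.Commutative op := ⟨hc⟩
  induction l with
  | nil => simpa using hi bot
  | cons x xs ih => simp only [List.map_cons, List.foldr_cons, ← ih]; ac_rfl

/-- partial fold over the first `m` variables -/
def Fm {n : ℕ} (f : Fin n → E) (m : ℕ) : E :=
  (((List.finRange n).take m).map f).foldr op bot

theorem Fm_zero {n : ℕ} (f : Fin n → E) : Fm op bot f 0 = bot := rfl

theorem Fm_succ (hc : ∀ a b, op a b = op b a) (ha : ∀ a b c, op (op a b) c = op a (op b c))
    (hi : ∀ a, op a bot = a) {n : ℕ} (f : Fin n → E) {m : ℕ} (h : m < n) :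
    Fm op bot f (m + 1) = op (Fm op bot f m) (f ⟨m, h⟩) := by
  have ht : (List.finRange n).take (m+1) = (List.finRange n).take m ++ [⟨m, h⟩] := by
    rw [List.take_succ]
    congr 1
    rw [List.getElem?_eq_getElem (by simpa using h)]
    simp [List.getElem_finRange]
  unfold Fm
  rw [ht, List.map_append, List.foldr_append]
  rw [myfold_init op bot hc ha hi]
  simp only [List.map_cons, List.map_nil, List.foldr_cons, List.foldr_nil, hi]

theorem Fm_succ_ge {n : ℕ} (f : Fin n → E) {m : ℕ} (h : n ≤ m) :
    Fm op bot f (m + 1) = Fm op bot f m := by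
  unfold Fm
  rw [List.take_of_length_le (by simpa using by omega), List.take_of_length_le (by simpa using h)]

theorem Fm_extract (hc : ∀ a b, op a b = op b a) (ha : ∀ a b c, op (op a b) c = op a (op b c))
    (hi : ∀ a, op a bot = a) {n : ℕ} (f : Fin n → E) (p : Fin n) :
    ∀ m : ℕ, p.val < m → ∃ R, Fm op bot f m = op (f p) R := by
  intro m
  induction m with
  | zero => omega
  | succ m ih =>
    intro hpm
    by_cases hmn : m < n
    · rcases Nat.lt_or_ge p.val m with h | h
      · obtain ⟨R, hR⟩ := ih h
        exact ⟨op R (f ⟨m, hmn⟩), by rw [Fm_succ op bot hc ha hi f hmn, hR, ha]⟩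
      · have hpe : p = ⟨m, hmn⟩ := Fin.ext (by simp; omega)
        exact ⟨Fm op bot f m, by rw [Fm_succ op bot hc ha hi f hmn, ← hpe, hc]⟩
    · obtain ⟨R, hR⟩ := ih (by have := p.isLt; omega)
      exact ⟨R, by rw [Fm_succ_ge op bot f (by omega), hR]⟩

end Helpers

/-- build an assignment by following the tree structure downward -/
def buildAssign {n : ℕ} (hn : 0 < n) (d : Fin n → Type) (parent : Fin n → Fin n)
    (hpar : ∀ i : Fin n, i ≠ ⟨0, hn⟩ → parent i < i) (a : d ⟨0, hn⟩)
    (ch : ∀ i : Fin n, i ≠ ⟨0, hn⟩ → d (parent i) → d i) : ∀ i : Fin n, d i :=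
  fun i =>
    if h : i = ⟨0, hn⟩ then cast (congrArg d h.symm) a
    else ch i h (buildAssign hn d parent hpar a ch (parent i))
termination_by i => i.val
decreasing_by exact hpar i h

/-- Directional arc consistency solves tree-structured binary VCSPs:
the unary cost of the root gives the optimal valuation for each root value. -/
theorem stmt17 {E : Type*} [LinearOrder E] (S : FairVS E)
    (n : ℕ) (hn : 0 < n)
    (d : Fin n → Type) [∀ i, Fintype (d i)] [∀ i, Nonempty (d i)]
    (parent : Fin n → Fin n)
    (hroot : parent ⟨0, hn⟩ = ⟨0, hn⟩)
    (hpar : ∀ i : Fin n, i ≠ ⟨0, hn⟩ → parent i < i)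
    (c : ∀ i, d i → E)
    (cb : ∀ i : Fin n, d (parent i) → d i → E)
    (val : (∀ i, d i) → E)
    (hval : ∀ t, val t =
      ((List.finRange n).map (fun i => c i (t i))).foldr S.op
        ((((List.finRange n).filter (fun i => i ≠ ⟨0, hn⟩)).map
          (fun i => cb i (t (parent i)) (t i))).foldr S.op S.bot))
    (hdac : ∀ i : Fin n, i ≠ ⟨0, hn⟩ → ∀ a : d (parent i),
      IsLeast { v : E | ∃ b : d i,
          v = S.op (S.op (c (parent i) a) (cb i a b)) (c i b) }
        (c (parent i) a)) :
    ∀ a : d ⟨0, hn⟩,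
      IsLeast { v : E | ∃ t : ∀ i, d i, t ⟨0, hn⟩ = a ∧ val t = v }
        (c ⟨0, hn⟩ a) := by
  haveI instA : Std.Associative S.op := ⟨S.assoc⟩
  haveI instC : Std.Commutative S.op := ⟨S.comm⟩
  intro a
  -- the combined per-variable cost
  set ft : (∀ i, d i) → Fin n → E := fun t i =>
    S.op (c i (t i)) (if i ≠ ⟨0, hn⟩ then cb i (t (parent i)) (t i) else S.bot) with hft
  -- the valuation as a partial fold
  have hval' : ∀ t, val t = Fm S.op S.bot (ft t) n := by
    intro t
    rw [hval t, myfold_init S.op S.bot S.comm S.assoc S.iden,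
      myfold_filter S.op S.bot S.comm S.iden (fun i : Fin n => i ≠ ⟨0, hn⟩)
        (fun i => cb i (t (parent i)) (t i)) (List.finRange n),
      myfold_combine S.op S.bot S.comm S.assoc S.iden]
    unfold Fm
    rw [List.take_of_length_le (by simp)]
  -- key step: going from stage m+1 to stage m+2
  have step : ∀ t : (∀ i, d i), ∀ m : ℕ, (h : m + 1 < n) → ∃ R : E,
      Fm S.op S.bot (ft t) (m + 1)
        = S.op (c (parent ⟨m+1, h⟩) (t (parent ⟨m+1, h⟩))) R ∧
      Fm S.op S.bot (ft t) (m + 2)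
        = S.op (S.op (S.op (c (parent ⟨m+1, h⟩) (t (parent ⟨m+1, h⟩)))
            (cb ⟨m+1, h⟩ (t (parent ⟨m+1, h⟩)) (t ⟨m+1, h⟩))) (c ⟨m+1, h⟩ (t ⟨m+1, h⟩))) R := by
    intro t m h
    set i : Fin n := ⟨m + 1, h⟩ with hidef
    have hne : i ≠ ⟨0, hn⟩ := by simp [hidef, Fin.ext_iff]
    have hplt : (parent i).val < m + 1 := hpar i hne
    obtain ⟨R0, hR0⟩ := Fm_extract S.op S.bot S.comm S.assoc S.iden (ft t) (parent i) (m+1) hplt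
    have hfp : ft t (parent i) = S.op (c (parent i) (t (parent i)))
        (if (parent i) ≠ ⟨0, hn⟩ then cb (parent i) (t (parent (parent i))) (t (parent i)) else S.bot) := rfl
    have hfi : ft t i = S.op (c i (t i)) (cb i (t (parent i)) (t i)) := by
      rw [hft]; simp only [if_pos hne]
    refine ⟨S.op (if (parent i) ≠ ⟨0, hn⟩ then cb (parent i) (t (parent (parent i))) (t (parent i)) else S.bot) R0, ?_, ?_⟩
    · rw [hR0, hfp, S.assoc]
    · rw [Fm_succ S.op S.bot S.comm S.assoc S.iden (ft t) h, hR0, hfp, hfi]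
      ac_rfl
  -- lower bound
  have low : ∀ t : (∀ i, d i), t ⟨0, hn⟩ = a → ∀ m : ℕ, m < n →
      c ⟨0, hn⟩ a ≤ Fm S.op S.bot (ft t) (m + 1) := by
    intro t ht m
    induction m with
    | zero =>
      intro h0
      rw [Fm_succ S.op S.bot S.comm S.assoc S.iden (ft t) h0, Fm_zero]
      have e1 : ft t ⟨0, hn⟩ = c ⟨0, hn⟩ a := by
        rw [hft]; simp only [ne_eq, not_true_eq_false, if_false, S.iden, ht]
      rw [S.comm, S.iden, e1]
    | succ m ih =>
      intro hlt
      obtain ⟨R, hR1, hR2⟩ := step t m hlt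
      calc c ⟨0, hn⟩ a ≤ Fm S.op S.bot (ft t) (m + 1) := ih (by omega)
        _ ≤ Fm S.op S.bot (ft t) (m + 2) := by
            rw [hR1, hR2]
            exact S.mono _ _ _ ((hdac ⟨m+1, hlt⟩ (by simp [Fin.ext_iff])
              (t (parent ⟨m+1, hlt⟩))).2 ⟨t ⟨m+1, hlt⟩, rfl⟩)
  -- the optimal assignment
  set ch : ∀ i : Fin n, i ≠ ⟨0, hn⟩ → d (parent i) → d i :=
    fun i hi b => ((hdac i hi b).1).choose with hchdef
  have hch : ∀ (i : Fin n) (hi : i ≠ ⟨0, hn⟩) (b : d (parent i)),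
      c (parent i) b = S.op (S.op (c (parent i) b) (cb i b (ch i hi b))) (c i (ch i hi b)) :=
    fun i hi b => ((hdac i hi b).1).choose_spec
  set t0 : ∀ i, d i := buildAssign hn d parent hpar a ch with ht0def
  have ht00 : t0 ⟨0, hn⟩ = a := by
    rw [ht0def]
    conv_lhs => rw [buildAssign]
    simp
  have ht0i : ∀ (i : Fin n) (hi : i ≠ ⟨0, hn⟩), t0 i = ch i hi (t0 (parent i)) := by
    intro i hi
    rw [ht0def]
    conv_lhs => rw [buildAssign]
    rw [dif_neg hi]
  have eqm : ∀ m : ℕ, m < n → Fm S.op S.bot (ft t0) (m + 1) = c ⟨0, hn⟩ a := by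
    intro m
    induction m with
    | zero =>
      intro h0
      rw [Fm_succ S.op S.bot S.comm S.assoc S.iden (ft t0) h0, Fm_zero]
      have e1 : ft t0 ⟨0, hn⟩ = c ⟨0, hn⟩ a := by
        rw [hft]; simp only [ne_eq, not_true_eq_false, if_false, S.iden, ht00]
      rw [S.comm, S.iden, e1]
    | succ m ih =>
      intro hlt
      obtain ⟨R, hR1, hR2⟩ := step t0 m hlt
      have hne : (⟨m+1, hlt⟩ : Fin n) ≠ ⟨0, hn⟩ := by simp [Fin.ext_iff]
      have hkey : S.op (S.op (c (parent ⟨m+1, hlt⟩) (t0 (parent ⟨m+1, hlt⟩)))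
          (cb ⟨m+1, hlt⟩ (t0 (parent ⟨m+1, hlt⟩)) (t0 ⟨m+1, hlt⟩))) (c ⟨m+1, hlt⟩ (t0 ⟨m+1, hlt⟩))
          = c (parent ⟨m+1, hlt⟩) (t0 (parent ⟨m+1, hlt⟩)) := by
        conv_lhs => rw [ht0i ⟨m+1, hlt⟩ hne]
        exact (hch ⟨m+1, hlt⟩ hne (t0 (parent ⟨m+1, hlt⟩))).symm
      rw [hR2, hkey, ← hR1]
      exact ih (by omega)
  constructor
  · refine ⟨t0, ht00, ?_⟩
    rw [hval' t0]
    have := eqm (n - 1) (by omega)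
    rwa [Nat.sub_add_cancel hn] at this
  · rintro v ⟨t, ht, rfl⟩
    rw [hval' t]
    have := low t ht (n - 1) (by omega)
    rwa [Nat.sub_add_cancel hn] at this
end

section
/- A directional arc consistent fair binary VCSP V is (2, f_min)-irreducible: for any two variables i < j and any equivalence-preserving replacement of the constraints c_i, c_j, c_{ij} by c'_i, c'_j, c'_{ij} (i.e., one preserving c_i(a) ⊕ c_{ij}(a,b) ⊕ c_j(b) = c'_i(a) ⊕ c'_{ij}(a,b) ⊕ c'_j(b) for all a ∈ d_i, b ∈ d_j), the lower bound f_min does not increase: f_min over the new constraints on {i,j} combined is at most f_min over the original. -/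
lemma FairVS.le_op {E : Type*} [LinearOrder E] (S : FairVS E) (a c : E) :
    a ≤ S.op a c := by
  have := S.mono c S.bot a (S.bot_le c)
  rw [S.comm S.bot a, S.iden, S.comm c a] at this
  exact this

lemma FairVS.mono_right {E : Type*} [LinearOrder E] (S : FairVS E)
    {c d : E} (a : E) (h : c ≤ d) : S.op a c ≤ S.op a d := by
  rw [S.comm a c, S.comm a d]; exact S.mono d c a h

/-- A directional arc consistent fair binary VCSP is (2, f_min)-irreducible:
any equivalence-preserving replacement of the constraints on a pair {i,j}
cannot increase the contribution of that pair to the lower bound f_min. -/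
theorem stmt18 {E : Type*} [LinearOrder E] (S : FairVS E)
    {A B : Type*} [Fintype A] [Fintype B] [Nonempty A] [Nonempty B]
    (ci : A → E) (cj : B → E) (cij : A × B → E)
    (ci' : A → E) (cj' : B → E) (cij' : A × B → E)
    (hequiv : ∀ a b, S.op (S.op (ci a) (cij (a, b))) (cj b) =
      S.op (S.op (ci' a) (cij' (a, b))) (cj' b))
    (hdac : ∀ a : A,
      IsLeast { v : E | ∃ b : B, v = S.op (S.op (ci a) (cij (a, b))) (cj b) }
        (ci a)) :
    S.op (S.op (Finset.univ.inf' Finset.univ_nonempty ci')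
        (Finset.univ.inf' Finset.univ_nonempty cj'))
      (Finset.univ.inf' Finset.univ_nonempty cij') ≤
    S.op (S.op (Finset.univ.inf' Finset.univ_nonempty ci)
        (Finset.univ.inf' Finset.univ_nonempty cj))
      (Finset.univ.inf' Finset.univ_nonempty cij) := by
  obtain ⟨a0, -, ha0⟩ := Finset.exists_mem_eq_inf' (Finset.univ_nonempty) ci
  obtain ⟨b0, hb0⟩ := (hdac a0).1
  have h1 : Finset.univ.inf' Finset.univ_nonempty ci' ≤ ci' a0 :=
    Finset.inf'_le _ (Finset.mem_univ a0)
  have h2 : Finset.univ.inf' Finset.univ_nonempty cj' ≤ cj' b0 :=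
    Finset.inf'_le _ (Finset.mem_univ b0)
  have h3 : Finset.univ.inf' Finset.univ_nonempty cij' ≤ cij' (a0, b0) :=
    Finset.inf'_le _ (Finset.mem_univ (a0, b0))
  calc _ ≤ S.op (S.op (ci' a0) (cj' b0)) (cij' (a0, b0)) := by
        refine le_trans (S.mono_right _ h3) (S.mono _ _ _ ?_)
        exact le_trans (S.mono_right _ h2) (S.mono _ _ _ h1)
    _ = S.op (S.op (ci' a0) (cij' (a0, b0))) (cj' b0) := by
        rw [S.assoc, S.assoc, S.comm (cj' b0)]
    _ = S.op (S.op (ci a0) (cij (a0, b0))) (cj b0) := (hequiv a0 b0).symm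
    _ = ci a0 := hb0.symm
    _ ≤ S.op (S.op (Finset.univ.inf' Finset.univ_nonempty ci)
        (Finset.univ.inf' Finset.univ_nonempty cj))
      (Finset.univ.inf' Finset.univ_nonempty cij) := by
        rw [ha0] at *
        exact le_trans (S.le_op _ _) (S.mono _ _ _ (S.le_op _ _))
end

section
/- In a strictly monotonic fair valuation structure, for any tuple valuation α and context valuation β: if β ≺ ⊤ then (α ⊕ β) ⊖ β = α; consequently in a strictly monotonic VCSP, condition c_P(t) = (c_P(t) ⊕ β) ⊖ β where β is the combination of unary costs of t can only fail when β = ⊤, i.e., when some unary cost of t equals ⊤ and c_P(t) ≠ ⊤. -/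
theorem stmt19 {E : Type*} [LinearOrder E] (S : FairVS E)
    (hsm : ∀ α β γ : E, β < α → γ ≠ S.top → S.op β γ < S.op α γ) :
    ∀ α β : E,
      (β < S.top → S.sub (S.op α β) β = α) ∧
      (S.sub (S.op α β) β ≠ α → β = S.top ∧ α ≠ S.top) := by
  intro α β
  have hble : ∀ a b : E, b ≤ S.op a b := by
    intro a b
    have h := S.mono a S.bot b (S.bot_le a)
    rwa [S.comm S.bot b, S.iden b] at h
  have key : β < S.top → S.sub (S.op α β) β = α := by
    intro hβ
    have h1 : β ≤ S.op α β := hble α β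
    have h2 : S.op (S.sub (S.op α β) β) β = S.op α β := S.sub_add β (S.op α β) h1
    have h3 : α ≤ S.sub (S.op α β) β := S.sub_max β (S.op α β) α h1 (S.comm α β ▸ rfl)
    rcases lt_or_eq_of_le h3 with h | h
    · have := hsm (S.sub (S.op α β) β) α β h (ne_of_lt hβ)
      rw [h2] at this
      exact absurd this (lt_irrefl _)
    · exact h.symm
  refine ⟨key, ?_⟩
  intro hne
  have hβtop : β = S.top := by
    rcases lt_or_eq_of_le (S.le_top β) with h | h
    · exact absurd (key h) hne
    · exact h
  refine ⟨hβtop, ?_⟩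
  intro hαtop
  apply hne
  subst hβtop hαtop
  rw [S.absorb]
  exact le_antisymm (S.le_top _)
    (S.sub_max S.top S.top S.top le_rfl (S.absorb S.top))
end
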